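/- Let Φ(x) = x̄/(ω_n ‖x‖ⁿ) be the Cauchy kernel on ℝⁿ\{0} with values in the Clifford algebra Cl_n (x̄ = -x for vectors, ω_n the surface area of the unit sphere). Then Φ is left monogenic: Σ_{j=1}^n e_j ∂_{x_j} Φ(x) = 0 for all x ≠ 0. -/

import Mathlib

/-- The quadratic form `Q(x) = -‖x‖²` on `ℝⁿ`, generating the Clifford algebra `Cl_n`. -/
noncomputable def Qneg (n : ℕ) : QuadraticForm ℝ (EuclideanSpace ℝ (Fin n)) :=
  -LinearMap.BilinMap.toQuadraticMap (innerₗ (EuclideanSpace ℝ (Fin n)) : LinearMap.BilinForm ℝ (EuclideanSpace ℝ (Fin n)))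

/-- `ω_n = 2π^{n/2}/Γ(n/2)`, the surface area of the unit sphere in `ℝⁿ`. -/
noncomputable def omegaN (n : ℕ) : ℝ :=
  2 * Real.pi ^ ((n : ℝ) / 2) / Real.Gamma ((n : ℝ) / 2)

/-- The `j`-th real component of the Cauchy kernel `Φ(x) = x̄/(ω_n ‖x‖ⁿ)`, with
`x̄ = -x`, so `Φ = Σ_j φ_j e_j` with `φ_j(x) = -x_j/(ω_n ‖x‖ⁿ)`. -/
noncomputable def cauchyKernelCoeff (n : ℕ) (j : Fin n)
    (x : EuclideanSpace ℝ (Fin n)) : ℝ :=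
  -(x j) / (omegaN n * ‖x‖ ^ n)

lemma omegaN_ne_zero {n : ℕ} (hn : 0 < n) : omegaN n ≠ 0 := by
  have h1 : (0:ℝ) < Real.pi ^ ((n : ℝ) / 2) :=
    Real.rpow_pos_of_pos Real.pi_pos _
  have h2 : (0:ℝ) < Real.Gamma ((n : ℝ) / 2) := by
    apply Real.Gamma_pos_of_pos
    positivity
  have : (0:ℝ) < omegaN n := by
    unfold omegaN; positivity
  exact ne_of_gt this

lemma key_fderiv (n : ℕ) (i j : Fin n) (x : EuclideanSpace ℝ (Fin n)) (hx : x ≠ 0) :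
    fderiv ℝ (cauchyKernelCoeff n j) x (EuclideanSpace.single i 1)
      = (-(if j = i then (1:ℝ) else 0) * ‖x‖ ^ 2 + n * x j * x i)
          / (omegaN n * ‖x‖ ^ (n + 2)) := by
  have hc : omegaN n ≠ 0 := omegaN_ne_zero j.pos
  have hr : (0:ℝ) < ‖x‖ := norm_pos_iff.mpr hx
  set c := omegaN n with hcdef
  set p : ℝ := -(n : ℝ) / 2 with hp
  -- derivative of the auxiliary function
  have hA : HasFDerivAt (fun y : EuclideanSpace ℝ (Fin n) => -(y j) / c)
      ((-c⁻¹) • (EuclideanSpace.proj j : EuclideanSpace ℝ (Fin n) →L[ℝ] ℝ)) x := by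
    have := ((-c⁻¹) • (EuclideanSpace.proj j :
      EuclideanSpace ℝ (Fin n) →L[ℝ] ℝ)).hasFDerivAt (x := x)
    convert this using 2 with y
    simp [neg_div, div_eq_inv_mul, mul_comm]
  have hq : (‖x‖ ^ 2 : ℝ) ≠ 0 := by positivity
  have hH : HasFDerivAt (fun y : EuclideanSpace ℝ (Fin n) => (‖y‖ ^ 2 : ℝ) ^ p)
      ((p * (‖x‖ ^ 2 : ℝ) ^ (p - 1)) • ((2:ℕ) • (innerSL ℝ x))) x :=
    by have := (Real.hasDerivAt_rpow_const (p := p) (Or.inl hq)).comp_hasFDerivAt x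
         (hasStrictFDerivAt_norm_sq x).hasFDerivAt
       exact this
  have hmul := hA.mul hH
  have heq : cauchyKernelCoeff n j =ᶠ[nhds x]
      fun y => (-(y j) / c) * (‖y‖ ^ 2 : ℝ) ^ p := by
    filter_upwards [IsOpen.mem_nhds isOpen_ne hx] with y hy
    have hry : (0:ℝ) < ‖y‖ := norm_pos_iff.mpr hy
    have : (‖y‖ ^ 2 : ℝ) ^ p = (‖y‖ ^ n)⁻¹ := by
      rw [← Real.rpow_natCast ‖y‖ 2, ← Real.rpow_mul (norm_nonneg y)]
      rw [show ((2:ℕ):ℝ) * p = -(n:ℝ) by rw [hp]; push_cast; ring]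
      rw [Real.rpow_neg (norm_nonneg y), Real.rpow_natCast]
    rw [cauchyKernelCoeff, this, div_mul_eq_div_div, div_eq_mul_inv]
  have hfd : HasFDerivAt (cauchyKernelCoeff n j)
      ((-(x j) / c) • ((p * (‖x‖ ^ 2 : ℝ) ^ (p - 1)) • ((2:ℕ) • (innerSL ℝ x)))
        + ((‖x‖ ^ 2 : ℝ) ^ p) • ((-c⁻¹) • (EuclideanSpace.proj j :
            EuclideanSpace ℝ (Fin n) →L[ℝ] ℝ))) x :=
    hmul.congr_of_eventuallyEq heq
  rw [hfd.fderiv]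
  have e1 : (‖x‖ ^ 2 : ℝ) ^ p = (‖x‖ ^ n)⁻¹ := by
    rw [← Real.rpow_natCast ‖x‖ 2, ← Real.rpow_mul (norm_nonneg x)]
    rw [show ((2:ℕ):ℝ) * p = -(n:ℝ) by rw [hp]; push_cast; ring]
    rw [Real.rpow_neg (norm_nonneg x), Real.rpow_natCast]
  have e2 : (‖x‖ ^ 2 : ℝ) ^ (p - 1) = (‖x‖ ^ (n + 2))⁻¹ := by
    rw [← Real.rpow_natCast ‖x‖ 2, ← Real.rpow_mul (norm_nonneg x)]
    rw [show ((2:ℕ):ℝ) * (p - 1) = -((n:ℝ) + 2) by rw [hp]; push_cast; ring]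
    rw [Real.rpow_neg (norm_nonneg x)]
    norm_cast
  have hinner : inner ℝ x (EuclideanSpace.single i (1:ℝ)) = x i := by
    rw [EuclideanSpace.inner_single_right]; simp
  have hsingle : (EuclideanSpace.single i (1:ℝ)) j = if j = i then (1:ℝ) else 0 := by
    rw [EuclideanSpace.single_apply]
  simp only [ContinuousLinearMap.add_apply, ContinuousLinearMap.smul_apply,
    innerSL_apply_apply, PiLp.proj_apply, e1, e2, hinner, hsingle]
  have hrn : (‖x‖:ℝ) ^ n ≠ 0 := by positivity
  have hrn2 : (‖x‖:ℝ) ^ (n+2) ≠ 0 := by positivity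
  rw [hp, pow_add]
  split_ifs with h
  · simp only [smul_eq_mul, nsmul_eq_mul, mul_inv]
    field_simp
    ring
  · simp only [smul_eq_mul, nsmul_eq_mul, mul_inv]
    field_simp
    ring

lemma polar_Qneg (n : ℕ) (i j : Fin n) :
    QuadraticMap.polar (Qneg n) (EuclideanSpace.single i 1) (EuclideanSpace.single j 1)
      = if i = j then (-2 : ℝ) else 0 := by
  simp only [QuadraticMap.polar, Qneg, QuadraticMap.neg_apply,
    LinearMap.BilinMap.toQuadraticMap_apply, innerₗ_apply_apply,
    inner_add_left, inner_add_right, EuclideanSpace.inner_single_left,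
    EuclideanSpace.inner_single_right, EuclideanSpace.single_apply, map_one, one_mul]
  by_cases h : i = j
  · subst h; simp; norm_num
  · simp [h, Ne.symm h]

lemma norm_sq_eq_sum (n : ℕ) (x : EuclideanSpace ℝ (Fin n)) :
    ‖x‖ ^ 2 = ∑ i, x i * x i := by
  rw [EuclideanSpace.norm_eq, Real.sq_sqrt (by positivity)]
  simp [Real.norm_eq_abs, sq_abs, sq]

/-- The Cauchy kernel `Φ(x) = x̄/(ω_n‖x‖ⁿ)` is left monogenic on `ℝⁿ \ {0}`:
`D Φ = Σ_i e_i ∂_{x_i} Φ = Σ_i Σ_j (∂_{x_i} φ_j) e_i e_j = 0` for `x ≠ 0`. -/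
theorem cauchyKernel_left_monogenic (n : ℕ) (x : EuclideanSpace ℝ (Fin n)) (hx : x ≠ 0) :
    ∑ i : Fin n, ∑ j : Fin n,
      (fderiv ℝ (cauchyKernelCoeff n j) x (EuclideanSpace.single i 1)) •
        (CliffordAlgebra.ι (Qneg n) (EuclideanSpace.single i 1) *
          CliffordAlgebra.ι (Qneg n) (EuclideanSpace.single j 1)) = 0 := by
  rcases Nat.eq_zero_or_pos n with h0 | hn
  · subst h0; simp
  set e : Fin n → CliffordAlgebra (Qneg n) :=
    fun i => CliffordAlgebra.ι (Qneg n) (EuclideanSpace.single i 1) with he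
  set a : Fin n → Fin n → ℝ := fun i j =>
    (-(if j = i then (1:ℝ) else 0) * ‖x‖ ^ 2 + n * x j * x i)
      / (omegaN n * ‖x‖ ^ (n + 2)) with ha
  have hre : (∑ i : Fin n, ∑ j : Fin n,
      (fderiv ℝ (cauchyKernelCoeff n j) x (EuclideanSpace.single i 1)) • (e i * e j))
      = ∑ i, ∑ j, a i j • (e i * e j) :=
    Finset.sum_congr rfl fun i _ => Finset.sum_congr rfl fun j _ => by
      rw [key_fderiv n i j x hx]
  rw [hre]
  set S := ∑ i, ∑ j, a i j • (e i * e j) with hS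
  have hsym : ∀ i j, a i j = a j i := fun i j => by
    simp only [ha]
    by_cases h : i = j
    · subst h; ring
    · rw [if_neg (fun hh => h hh.symm), if_neg h]
      ring
  have h2 : S = ∑ i, ∑ j, a i j • (e j * e i) := by
    rw [hS, Finset.sum_comm]
    exact Finset.sum_congr rfl fun i _ => Finset.sum_congr rfl fun j _ => by
      rw [hsym i j]
  have htr : ∑ i, a i i = 0 := by
    have hs : ∑ i, (x i * x i) = ‖x‖ ^ 2 := (norm_sq_eq_sum n x).symm
    simp only [ha]
    rw [← Finset.sum_div]
    convert zero_div _
    simp only [if_true]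
    have hterm : ∀ i : Fin n, (-(1:ℝ)) * ‖x‖ ^ 2 + ↑n * x i * x i
        = -‖x‖ ^ 2 + ↑n * (x i * x i) := fun i => by ring
    rw [Finset.sum_congr rfl (fun i _ => hterm i), Finset.sum_add_distrib,
      Finset.sum_const, ← Finset.mul_sum, hs, Finset.card_univ, Fintype.card_fin,
      nsmul_eq_mul]
    ring
  have hSS : S + S = 0 := by
    nth_rewrite 2 [h2]
    nth_rewrite 1 [hS]
    rw [← Finset.sum_add_distrib]
    have : ∀ i ∈ Finset.univ, ((∑ j, a i j • (e i * e j)) + ∑ j, a i j • (e j * e i)) =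
        ∑ j, a i j • (if i = j then (-2:ℝ) • (1 : CliffordAlgebra (Qneg n)) else 0) := by
      intro i _
      rw [← Finset.sum_add_distrib]
      refine Finset.sum_congr rfl fun j _ => ?_
      rw [← smul_add, he]
      rw [CliffordAlgebra.ι_mul_ι_add_swap, polar_Qneg]
      split_ifs with h
      · rw [Algebra.algebraMap_eq_smul_one]
      · simp
    rw [Finset.sum_congr rfl this]
    have : ∀ i ∈ Finset.univ, (∑ j, a i j • (if i = j then (-2:ℝ) • (1 : CliffordAlgebra (Qneg n)) else 0))
        = a i i • ((-2:ℝ) • (1 : CliffordAlgebra (Qneg n))) := by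
      intro i _
      rw [Finset.sum_eq_single i]
      · rw [if_pos rfl]
      · intro b _ hb; rw [if_neg (Ne.symm hb), smul_zero]
      · intro h; exact absurd (Finset.mem_univ i) h
    rw [Finset.sum_congr rfl this, ← Finset.sum_smul, htr, zero_smul]
  have hS2 : (2:ℝ) • S = 0 := by rw [two_smul]; exact hSS
  calc S = ((2:ℝ)⁻¹ * 2) • S := by norm_num
    _ = (2:ℝ)⁻¹ • ((2:ℝ) • S) := by rw [mul_smul]
    _ = 0 := by rw [hS2, smul_zero]
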